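/- The functional 𝒲 is not polyconvex: there is no convex function Φ : ℝ^{2×2} × ℝ → ℝ ∪ {+∞} such that 𝒲(A) = Φ(A, det A) for every real 2×2 matrix A with det A > 0. -/

import Mathlib

open MeasureTheory Matrix

noncomputable section

/-- Operator norm of a 2×2 real matrix as a linear map of Euclidean ℝ². -/
def opNorm (A : Matrix (Fin 2) (Fin 2) ℝ) : ℝ :=
  ‖Matrix.toEuclideanCLM (𝕜 := ℝ) A‖

/-- The Burkholder functional. -/
def Bp (p : ℝ) (A : Matrix (Fin 2) (Fin 2) ℝ) : ℝ :=
  ((p / 2 - 1) * opNorm A ^ 2 - p / 2 * A.det) * opNorm A ^ (p - 2)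

/-- The functional 𝒲. -/
def Wfun (A : Matrix (Fin 2) (Fin 2) ℝ) : ℝ :=
  opNorm A ^ 2 / A.det - Real.log (opNorm A ^ 2 / A.det) + Real.log A.det

/-- The functional ℱ. -/
def Ffun (A : Matrix (Fin 2) (Fin 2) ℝ) : ℝ :=
  opNorm A ^ 2 - (1 + Real.log (opNorm A ^ 2)) * A.det

/-- A 2×2 real matrix acting on ℂ ≅ ℝ². -/
def mApply (A : Matrix (Fin 2) (Fin 2) ℝ) (z : ℂ) : ℂ :=
  ⟨A 0 0 * z.re + A 0 1 * z.im, A 1 0 * z.re + A 1 1 * z.im⟩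

/-- The 2×2 real matrix of an ℝ-linear map ℂ → ℂ in the basis (1, i). -/
def clmToMatrix (T : ℂ →L[ℝ] ℂ) : Matrix (Fin 2) (Fin 2) ℝ :=
  !![(T 1).re, (T Complex.I).re; (T 1).im, (T Complex.I).im]

/-- The total derivative of f : ℂ → ℂ at z, viewed as a 2×2 real matrix. -/
def Dm (f : ℂ → ℂ) (z : ℂ) : Matrix (Fin 2) (Fin 2) ℝ :=
  clmToMatrix (fderiv ℝ f z)

/-- The matrix of the ℝ-linear map z ↦ z + b·conj z. -/
def Af (b : ℂ) : Matrix (Fin 2) (Fin 2) ℝ :=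
  !![1 + b.re, b.im; b.im, 1 - b.re]

/-- Rank-one convexity of a functional on ℝ^{2×2}_+. -/
def RankOneConvexOnPos (E : Matrix (Fin 2) (Fin 2) ℝ → ℝ) : Prop :=
  ∀ A : Matrix (Fin 2) (Fin 2) ℝ, 0 < A.det →
    ∀ X : Matrix (Fin 2) (Fin 2) ℝ, X.rank = 1 →
      ConvexOn ℝ {t : ℝ | 0 < (A + t • X).det} (fun t => E (A + t • X))

/-- Quasiconvexity of a functional on ℝ^{2×2}_+ tested on C¹ diffeomorphic deformations
with affine boundary values. -/
def QuasiconvexOnPos (E : Matrix (Fin 2) (Fin 2) ℝ → ℝ) : Prop :=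
  ∀ A : Matrix (Fin 2) (Fin 2) ℝ, 0 < A.det →
    ∀ Ω : Set ℂ, IsOpen Ω → IsConnected Ω → Bornology.IsBounded Ω →
      ∀ (f : ℂ → ℂ) (U : Set ℂ), IsOpen U → closure Ω ⊆ U → ContDiffOn ℝ 1 f U →
        Set.InjOn f (closure Ω) → (∀ x ∈ closure Ω, 0 < (Dm f x).det) →
        (∀ x ∈ frontier Ω, f x = mApply A x) →
        E A ≤ (1 / (volume Ω).toReal) * ∫ x in Ω, E (Dm f x)

/-- Rank-one convexity for extended-real-valued functionals on m×n matrices: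
convexity along rank-one lines in the epigraph sense. -/
def RankOneConvexE {m n : ℕ} (E : Matrix (Fin m) (Fin n) ℝ → EReal) : Prop :=
  ∀ (A X : Matrix (Fin m) (Fin n) ℝ), X.rank = 1 →
    Convex ℝ {q : ℝ × ℝ | E (A + q.1 • X) ≤ (q.2 : EReal)}

/-- Polyconvexity of a functional on ℝ^{2×2}_+: it is the restriction of a convex
function (with values in ℝ ∪ {+∞}) of the pair (A, det A). -/
def Polyconvex (F : Matrix (Fin 2) (Fin 2) ℝ → ℝ) : Prop :=
  ∃ Φ : Matrix (Fin 2) (Fin 2) ℝ × ℝ → EReal,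
    (∀ q, Φ q ≠ ⊥) ∧
    Convex ℝ {q : (Matrix (Fin 2) (Fin 2) ℝ × ℝ) × ℝ | Φ q.1 ≤ (q.2 : EReal)} ∧
    ∀ A : Matrix (Fin 2) (Fin 2) ℝ, 0 < A.det → Φ (A, A.det) = (F A : EReal)

end

open MeasureTheory Matrix

lemma clm_apply (A : Matrix (Fin 2) (Fin 2) ℝ) (x : EuclideanSpace ℝ (Fin 2)) (i : Fin 2) :
    (Matrix.toEuclideanCLM (𝕜 := ℝ) A x) i = A i 0 * x 0 + A i 1 * x 1 := by
  have h := Matrix.ofLp_toEuclideanCLM (𝕜 := ℝ) A x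
  have := congrFun h i
  simpa [Matrix.mulVec, dotProduct, Fin.sum_univ_two] using this

lemma opNorm_diag (a b : ℝ) (hb : 0 ≤ b) (hab : b ≤ a) : opNorm !![a, 0; 0, b] = a := by
  have ha : 0 ≤ a := hb.trans hab
  set T := Matrix.toEuclideanCLM (𝕜 := ℝ) !![a, 0; 0, b] with hT
  refine le_antisymm ?_ ?_
  · refine ContinuousLinearMap.opNorm_le_bound _ ha (fun x => ?_)
    have h0 := clm_apply !![a, 0; 0, b] x 0
    have h1 := clm_apply !![a, 0; 0, b] x 1
    simp only [Matrix.of_apply, Matrix.cons_val', Matrix.cons_val_zero, Matrix.cons_val_one, Matrix.head_cons,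
      Matrix.empty_val', Matrix.cons_val_fin_one, Matrix.head_fin_const, zero_mul, add_zero, mul_zero, zero_add] at h0 h1
    rw [EuclideanSpace.norm_eq, EuclideanSpace.norm_eq]
    rw [show a * Real.sqrt (∑ i, ‖x i‖ ^ 2) = Real.sqrt (a ^ 2 * ∑ i, ‖x i‖ ^ 2) by
      rw [Real.sqrt_mul (by positivity), Real.sqrt_sq ha]]
    apply Real.sqrt_le_sqrt
    simp only [Fin.sum_univ_two, Real.norm_eq_abs, sq_abs, h0, h1]
    nlinarith [sq_nonneg (x 1), sq_nonneg (x 0),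
      mul_nonneg (mul_nonneg (sub_nonneg.2 hab) (add_nonneg hb ha)) (sq_nonneg (x 1))]
  · have he : ‖(EuclideanSpace.single 0 (1:ℝ) : EuclideanSpace ℝ (Fin 2))‖ = 1 := by
      simp [EuclideanSpace.norm_single]
    have := T.le_opNorm (EuclideanSpace.single 0 (1:ℝ))
    rw [he, mul_one] at this
    refine le_trans (le_of_eq ?_) this
    rw [EuclideanSpace.norm_eq]
    have h0 := clm_apply !![a, 0; 0, b] (EuclideanSpace.single 0 (1:ℝ)) 0
    have h1 := clm_apply !![a, 0; 0, b] (EuclideanSpace.single 0 (1:ℝ)) 1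
    simp only [EuclideanSpace.single_apply, Matrix.of_apply, Matrix.cons_val', Matrix.cons_val_zero, Matrix.cons_val_one,
      Matrix.head_cons, Matrix.empty_val', Matrix.cons_val_fin_one, Matrix.head_fin_const, zero_mul, add_zero, mul_zero,
      zero_add] at h0 h1
    rw [if_pos trivial, mul_one, ← hT] at h0
    rw [if_neg (by decide), mul_zero, ← hT] at h1
    simp only [Fin.sum_univ_two, Real.norm_eq_abs, sq_abs, ← hT, h0, h1]
    norm_num
    rw [Real.sqrt_sq ha]

lemma opNorm_diag' (a b : ℝ) (ha : 0 ≤ a) (hab : a ≤ b) : opNorm !![a, 0; 0, b] = b := by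
  have hb : 0 ≤ b := ha.trans hab
  set T := Matrix.toEuclideanCLM (𝕜 := ℝ) !![a, 0; 0, b] with hT
  refine le_antisymm ?_ ?_
  · refine ContinuousLinearMap.opNorm_le_bound _ hb (fun x => ?_)
    have h0 := clm_apply !![a, 0; 0, b] x 0
    have h1 := clm_apply !![a, 0; 0, b] x 1
    simp only [Matrix.of_apply, Matrix.cons_val', Matrix.cons_val_zero, Matrix.cons_val_one, Matrix.head_cons,
      Matrix.empty_val', Matrix.cons_val_fin_one, Matrix.head_fin_const, zero_mul, add_zero, mul_zero, zero_add] at h0 h1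
    rw [EuclideanSpace.norm_eq, EuclideanSpace.norm_eq]
    rw [show b * Real.sqrt (∑ i, ‖x i‖ ^ 2) = Real.sqrt (b ^ 2 * ∑ i, ‖x i‖ ^ 2) by
      rw [Real.sqrt_mul (by positivity), Real.sqrt_sq hb]]
    apply Real.sqrt_le_sqrt
    simp only [Fin.sum_univ_two, Real.norm_eq_abs, sq_abs, h0, h1]
    nlinarith [sq_nonneg (x 1), sq_nonneg (x 0),
      mul_nonneg (mul_nonneg (sub_nonneg.2 hab) (add_nonneg hb ha)) (sq_nonneg (x 0))]
  · have he : ‖(EuclideanSpace.single 1 (1:ℝ) : EuclideanSpace ℝ (Fin 2))‖ = 1 := by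
      simp [EuclideanSpace.norm_single]
    have := T.le_opNorm (EuclideanSpace.single 1 (1:ℝ))
    rw [he, mul_one] at this
    refine le_trans (le_of_eq ?_) this
    rw [EuclideanSpace.norm_eq]
    have h0 := clm_apply !![a, 0; 0, b] (EuclideanSpace.single 1 (1:ℝ)) 0
    have h1 := clm_apply !![a, 0; 0, b] (EuclideanSpace.single 1 (1:ℝ)) 1
    simp only [EuclideanSpace.single_apply, Matrix.of_apply, Matrix.cons_val', Matrix.cons_val_zero, Matrix.cons_val_one,
      Matrix.head_cons, Matrix.empty_val', Matrix.cons_val_fin_one, Matrix.head_fin_const, zero_mul, add_zero, mul_zero,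
      zero_add] at h0 h1
    rw [if_neg (by decide), mul_zero, ← hT] at h0
    rw [if_pos trivial, mul_one, ← hT] at h1
    simp only [Fin.sum_univ_two, Real.norm_eq_abs, sq_abs, ← hT, h0, h1]
    norm_num
    rw [Real.sqrt_sq hb]

lemma Wfun_diag (a b : ℝ) (hb : 0 < b) (hab : b ≤ a) :
    Wfun !![a, 0; 0, b] = a / b + 2 * Real.log b := by
  have ha : 0 < a := hb.trans_le hab
  have hdet : (!![a, 0; 0, b] : Matrix (Fin 2) (Fin 2) ℝ).det = a * b := by
    rw [Matrix.det_fin_two_of]; ring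
  rw [Wfun, opNorm_diag a b hb.le hab, hdet]
  have h1 : a ^ 2 / (a * b) = a / b := by field_simp
  rw [h1, Real.log_div ha.ne' hb.ne', Real.log_mul ha.ne' hb.ne']
  ring

lemma Wfun_diag' (a b : ℝ) (ha : 0 < a) (hab : a ≤ b) :
    Wfun !![a, 0; 0, b] = b / a + 2 * Real.log a := by
  have hb : 0 < b := ha.trans_le hab
  have hdet : (!![a, 0; 0, b] : Matrix (Fin 2) (Fin 2) ℝ).det = a * b := by
    rw [Matrix.det_fin_two_of]; ring
  rw [Wfun, opNorm_diag' a b ha.le hab, hdet]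
  have h1 : b ^ 2 / (a * b) = b / a := by field_simp
  rw [h1, Real.log_div hb.ne' ha.ne', Real.log_mul ha.ne' hb.ne']
  ring

theorem stmt19 :
    ¬ ∃ Φ : Matrix (Fin 2) (Fin 2) ℝ × ℝ → EReal,
      (∀ q, Φ q ≠ ⊥) ∧
      Convex ℝ {q : (Matrix (Fin 2) (Fin 2) ℝ × ℝ) × ℝ | Φ q.1 ≤ (q.2 : EReal)} ∧
      ∀ A : Matrix (Fin 2) (Fin 2) ℝ, 0 < A.det → Φ (A, A.det) = (Wfun A : EReal) := by
  rintro ⟨Φ, hbot, hconv, hval⟩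
  set s := Real.sqrt 3 with hsd
  have hs : s ^ 2 = 3 := Real.sq_sqrt (by norm_num)
  have hs_lb : (1.7 : ℝ) < s := by
    rw [hsd]
    rw [show (1.7:ℝ) = Real.sqrt (1.7^2) by rw [Real.sqrt_sq]; norm_num]
    exact Real.sqrt_lt_sqrt (by norm_num) (by norm_num)
  have hs_ub : s < 1.8 := by
    rw [hsd]
    rw [show (1.8:ℝ) = Real.sqrt (1.8^2) by rw [Real.sqrt_sq]; norm_num]
    exact Real.sqrt_lt_sqrt (by norm_num) (by norm_num)
  set ε : ℝ := 2 - s with hεd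
  set c : ℝ := (6 - s) / 3 with hcd
  have hε : 0 < ε := by rw [hεd]; linarith
  have hc : 0 < c := by rw [hcd]; linarith
  set A₁ : Matrix (Fin 2) (Fin 2) ℝ := !![ε, 0; 0, ε] with hA₁
  set A₂ : Matrix (Fin 2) (Fin 2) ℝ := !![(3:ℝ), 0; 0, 1] with hA₂
  set A₃ : Matrix (Fin 2) (Fin 2) ℝ := !![(1:ℝ), 0; 0, 3] with hA₃
  set A₀ : Matrix (Fin 2) (Fin 2) ℝ := !![c, 0; 0, c] with hA₀
  have hdet1 : A₁.det = ε ^ 2 := by rw [hA₁, Matrix.det_fin_two_of]; ring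
  have hdet2 : A₂.det = 3 := by rw [hA₂, Matrix.det_fin_two_of]; ring
  have hdet3 : A₃.det = 3 := by rw [hA₃, Matrix.det_fin_two_of]; ring
  have hdet0 : A₀.det = c ^ 2 := by rw [hA₀, Matrix.det_fin_two_of]; ring
  have hW1 : Wfun A₁ = 1 + 2 * Real.log ε := by
    rw [hA₁, Wfun_diag ε ε hε le_rfl, div_self hε.ne']
  have hW2 : Wfun A₂ = 3 := by
    rw [hA₂, Wfun_diag 3 1 (by norm_num) (by norm_num)]
    norm_num
  have hW3 : Wfun A₃ = 3 := by
    rw [hA₃, Wfun_diag' 1 3 (by norm_num) (by norm_num)]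
    norm_num
  have hW0 : Wfun A₀ = 1 + 2 * Real.log c := by
    rw [hA₀, Wfun_diag c c hc le_rfl, div_self hc.ne']
  set S := {q : (Matrix (Fin 2) (Fin 2) ℝ × ℝ) × ℝ | Φ q.1 ≤ (q.2 : EReal)} with hSd
  have m1 : ((A₁, ε ^ 2), 1 + 2 * Real.log ε) ∈ S := by
    show Φ (A₁, ε ^ 2) ≤ _
    rw [← hdet1, hval A₁ (by rw [hdet1]; positivity), hW1]
  have m2 : ((A₂, (3:ℝ)), (3:ℝ)) ∈ S := by
    show Φ (A₂, (3:ℝ)) ≤ _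
    rw [show ((A₂, (3:ℝ))) = (A₂, A₂.det) by rw [hdet2],
      hval A₂ (by rw [hdet2]; norm_num), hW2]
  have m3 : ((A₃, (3:ℝ)), (3:ℝ)) ∈ S := by
    show Φ (A₃, (3:ℝ)) ≤ _
    rw [show ((A₃, (3:ℝ))) = (A₃, A₃.det) by rw [hdet3],
      hval A₃ (by rw [hdet3]; norm_num), hW3]
  have mmid := hconv m2 m3 (by norm_num : (0:ℝ) ≤ 1/2) (by norm_num : (0:ℝ) ≤ 1/2) (by norm_num)
  have mp := hconv m1 mmid (by norm_num : (0:ℝ) ≤ 1/3) (by norm_num : (0:ℝ) ≤ 2/3) (by norm_num)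
  have hmat : (1/3 : ℝ) • A₁ + (2/3 : ℝ) • ((1/2 : ℝ) • A₂ + (1/2 : ℝ) • A₃) = A₀ := by
    rw [hA₁, hA₂, hA₃, hA₀, hεd, hcd]
    ext i j
    fin_cases i <;> fin_cases j <;>
      simp [Matrix.smul_apply, Matrix.add_apply] <;> ring
  have hdd : (1/3 : ℝ) * ε ^ 2 + 2/3 * (1/2 * 3 + 1/2 * 3) = c ^ 2 := by
    rw [hεd, hcd]
    linear_combination (2/9 : ℝ) * hs
  have hpt : (1/3 : ℝ) • (((A₁, ε ^ 2), 1 + 2 * Real.log ε) : (Matrix (Fin 2) (Fin 2) ℝ × ℝ) × ℝ)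
      + (2/3 : ℝ) • ((1/2 : ℝ) • (((A₂, (3:ℝ)), (3:ℝ)) : (Matrix (Fin 2) (Fin 2) ℝ × ℝ) × ℝ)
        + (1/2 : ℝ) • (((A₃, (3:ℝ)), (3:ℝ)) : (Matrix (Fin 2) (Fin 2) ℝ × ℝ) × ℝ))
      = ((A₀, c ^ 2), (1 + 2 * Real.log ε) / 3 + 2) := by
    simp only [Prod.smul_mk, Prod.mk_add_mk, smul_eq_mul]
    refine Prod.ext (Prod.ext ?_ ?_) ?_
    · exact hmat
    · simp only; linarith [hdd]
    · simp only; ring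
  rw [hpt] at mp
  have key : Φ (A₀, c ^ 2) ≤ (((1 + 2 * Real.log ε) / 3 + 2 : ℝ) : EReal) := mp
  rw [show ((A₀, c ^ 2)) = (A₀, A₀.det) by rw [hdet0],
    hval A₀ (by rw [hdet0]; positivity), hW0] at key
  have key' : (1 : ℝ) + 2 * Real.log c ≤ (1 + 2 * Real.log ε) / 3 + 2 :=
    EReal.coe_le_coe_iff.mp key
  -- Now derive the contradiction : 2 < 3 log c - log ε
  have hlog : 3 * Real.log c - Real.log ε = Real.log ((69 + 16 * s) / 9) := by
    rw [show (3:ℝ) * Real.log c = Real.log (c ^ 3) by rw [Real.log_pow]; push_cast; ring]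
    rw [← Real.log_div (by positivity) hε.ne']
    congr 1
    rw [hcd, hεd]
    have : (2 - s) ≠ 0 := by linarith
    field_simp
    linear_combination (594 - 9 * s : ℝ) * hs
  have harg : (0 : ℝ) < (69 + 16 * s) / 9 := by
    have : 0 < s := by linarith
    positivity
  have hgt : 2 < Real.log ((69 + 16 * s) / 9) := by
    rw [Real.lt_log_iff_exp_lt harg]
    have he2 : Real.exp 2 = Real.exp 1 * Real.exp 1 := by
      rw [← Real.exp_add]; norm_num
    nlinarith [Real.exp_one_lt_d9, Real.exp_pos 1, hs_lb]
  linarith [hlog ▸ hgt]
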